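/- Let G₃ = ∏_{h=0}^{∞} (1 + X^{−3ʰ}) ∈ ℚ((X⁻¹)) (the product converges in the X⁻¹-adic topology). Then every partial quotient of the continued fraction expansion of G₃ over ℚ is linear; equivalently, for every natural number n there exist coprime polynomials x, y ∈ ℚ[X] with deg y = n and deg(yG₃ − x) = −(n + 1). -/

import Mathlib

open Polynomial HahnSeries
open scoped Classical

/-- The degree of a formal Laurent series in `X⁻¹`: writing `F = ∑ f_i X^{-i}`
(a `LaurentSeries` in the variable `t = X⁻¹`), `deg F = -min {i : f_i ≠ 0}`,
with `deg 0 = ⊥`. -/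
noncomputable def lsDeg {K : Type*} [Field K] (F : LaurentSeries K) : WithBot ℤ :=
  if F = 0 then ⊥ else ((-F.order : ℤ) : WithBot ℤ)

/-- A polynomial in `X` viewed as an element of `K((X⁻¹))`, i.e. evaluated at the
inverse `X = t⁻¹` of the `LaurentSeries` variable `t`. -/
noncomputable def polyToLS {K : Type*} [Field K] (p : K[X]) : LaurentSeries K :=
  Polynomial.aeval (HahnSeries.single (-1 : ℤ) (1 : K)) p

/-- Cantor indicator: 1 if all base-3 digits of `n` are 0 or 1, else 0. -/
def cant : ℕ → ℕ
  | 0 => 1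
  | (n+1) => if (n+1) % 3 = 2 then 0 else cant ((n+1)/3)
  decreasing_by exact Nat.div_lt_self (Nat.succ_pos n) (by norm_num)

lemma cant_zero : cant 0 = 1 := by rw [cant]
lemma cant_one : cant 1 = 1 := by rw [cant]; norm_num; rw [cant]

lemma cant_aux (n : ℕ) (hn : n ≠ 0) : cant n = if n % 3 = 2 then 0 else cant (n/3) := by
  obtain ⟨m, rfl⟩ := Nat.exists_eq_succ_of_ne_zero hn
  rw [cant]

lemma cant_3 (k : ℕ) : cant (3*k) = cant k := by
  rcases Nat.eq_zero_or_pos k with rfl | hk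
  · rfl
  · rw [cant_aux (3*k) (by omega)]
    have h1 : (3*k) % 3 ≠ 2 := by omega
    have h2 : (3*k) / 3 = k := Nat.mul_div_cancel_left k (by norm_num)
    rw [h2, if_neg h1]

lemma cant_31 (k : ℕ) : cant (3*k+1) = cant k := by
  rw [cant_aux (3*k+1) (by omega)]
  have h1 : (3*k+1) % 3 ≠ 2 := by omega
  have h2 : (3*k+1) / 3 = k := by rw [Nat.mul_add_div (by norm_num)]; norm_num
  rw [h2, if_neg h1]

lemma cant_32 (k : ℕ) : cant (3*k+2) = 0 := by
  rw [cant_aux (3*k+2) (by omega)]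
  have h1 : (3*k+2) % 3 = 2 := by omega
  rw [h1]; norm_num

/-- adding `3^m` on top of `s < 3^m` does not change `cant`. -/
lemma cant_add_pow (m : ℕ) : ∀ s < 3^m, cant (3^m + s) = cant s := by
  induction m with
  | zero =>
    intro s hs
    have : s = 0 := by simpa using hs
    subst this
    show cant 1 = cant 0
    rw [cant_one, cant_zero]
  | succ m ih =>
    intro s hs
    have h3 : (3:ℕ)^(m+1) = 3 * 3^m := by ring
    obtain ⟨q, r, hr, rfl⟩ : ∃ q r, r < 3 ∧ s = 3*q + r := ⟨s/3, s%3, by omega, by omega⟩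
    have hq : q < 3^m := by omega
    have key : 3^(m+1) + (3*q+r) = 3*(3^m + q) + r := by rw [h3]; ring
    rw [key]
    interval_cases r
    · have k2 : 3*q+0 = 3*q := by ring
      rw [show 3*(3^m+q)+0 = 3*(3^m+q) by ring, k2, cant_3, cant_3, ih q hq]
    · rw [cant_31, cant_31, ih q hq]
    · rw [cant_32, cant_32]

/-- numbers with leading base-3 digit 2 have `cant = 0`. -/
lemma cant_two_lead (m : ℕ) : ∀ n, 2*3^m ≤ n → n < 3^(m+1) → cant n = 0 := by
  induction m with
  | zero =>
    intro n h1 h2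
    have : n = 2 := by norm_num at h1 h2; omega
    subst this
    exact cant_32 0
  | succ m ih =>
    intro n h1 h2
    have h3 : (3:ℕ)^(m+2) = 3 * 3^(m+1) := by ring
    have h4 : (3:ℕ)^(m+1) = 3 * 3^m := by ring
    obtain ⟨q, r, hr, rfl⟩ : ∃ q r, r < 3 ∧ n = 3*q + r := ⟨n/3, n%3, by omega, by omega⟩
    have hq1 : 2*3^m ≤ q := by omega
    have hq2 : q < 3^(m+1) := by omega
    interval_cases r
    · rw [show 3*q+0 = 3*q by ring, cant_3, ih q hq1 hq2]
    · rw [cant_31, ih q hq1 hq2]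
    · rw [cant_32]


section CantorMod3
open Finset

/-- autocorrelation of `cant`. -/
def cA (n : ℕ) : ℕ := ∑ i ∈ range (n+1), cant i * cant (n - i)

lemma sum_range_three_mul {M : Type*} [AddCommMonoid M] (f : ℕ → M) (m : ℕ) :
    ∑ i ∈ range (3*m), f i = ∑ a ∈ range m, (f (3*a) + f (3*a+1) + f (3*a+2)) := by
  induction m with
  | zero => simp
  | succ m ih =>
    have h : 3*(m+1) = (3*m) + 1 + 1 + 1 := by ring
    rw [h, sum_range_succ, sum_range_succ, sum_range_succ, ih, sum_range_succ]
    have e1 : 3*m+1+1 = 3*m+2 := by ring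
    rw [e1]
    abel

lemma cA_zero : cA 0 = 1 := by simp [cA, cant_zero]

lemma cA_3 (m : ℕ) : cA (3*m) = cA m := by
  unfold cA
  rw [show 3*m+1 = 3*m + 1 from rfl, sum_range_succ, sum_range_three_mul]
  have step : ∀ a ∈ range m,
      (cant (3*a) * cant (3*m - 3*a) + cant (3*a+1) * cant (3*m - (3*a+1))
        + cant (3*a+2) * cant (3*m - (3*a+2)))
      = cant a * cant (m - a) := by
    intro a ha
    have ham := mem_range.mp ha
    have e1 : 3*m - 3*a = 3*(m-a) := by omega
    have e2 : 3*m - (3*a+1) = 3*(m-a-1)+2 := by omega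
    rw [e1, e2, cant_3, cant_3, cant_31, cant_32, cant_32]
    ring
  rw [sum_congr rfl step]
  have etail : cant (3*m) * cant (3*m - 3*m) = cant m := by
    rw [Nat.sub_self, cant_3, cant_zero, Nat.mul_one]
  rw [etail, sum_range_succ, Nat.sub_self, cant_zero, Nat.mul_one]

lemma cA_31 (m : ℕ) : cA (3*m+1) = 2 * cA m := by
  unfold cA
  rw [show 3*m+1+1 = 3*m + 1 + 1 from rfl, sum_range_succ, sum_range_succ, sum_range_three_mul]
  have step : ∀ a ∈ range m,
      (cant (3*a) * cant (3*m+1 - 3*a) + cant (3*a+1) * cant (3*m+1 - (3*a+1))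
        + cant (3*a+2) * cant (3*m+1 - (3*a+2)))
      = 2 * (cant a * cant (m - a)) := by
    intro a ha
    have ham := mem_range.mp ha
    have e1 : 3*m+1 - 3*a = 3*(m-a)+1 := by omega
    have e2 : 3*m+1 - (3*a+1) = 3*(m-a) := by omega
    rw [e1, e2, cant_3, cant_3, cant_31, cant_31, cant_32]
    ring
  rw [sum_congr rfl step, ← Finset.mul_sum]
  have t1 : cant (3*m) * cant (3*m+1 - 3*m) = cant m := by
    rw [show 3*m+1-3*m = 1 by omega, cant_3, cant_one, Nat.mul_one]
  have t2 : cant (3*m+1) * cant (3*m+1 - (3*m+1)) = cant m := by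
    rw [Nat.sub_self, cant_31, cant_zero, Nat.mul_one]
  rw [t1, t2]
  rw [sum_range_succ, Nat.sub_self, cant_zero, Nat.mul_one]
  ring

lemma cA_32 (m : ℕ) : cA (3*m+2) = cA m := by
  unfold cA
  rw [show 3*m+2+1 = 3*(m+1) by ring, sum_range_three_mul]
  have step : ∀ a ∈ range (m+1),
      (cant (3*a) * cant (3*m+2 - 3*a) + cant (3*a+1) * cant (3*m+2 - (3*a+1))
        + cant (3*a+2) * cant (3*m+2 - (3*a+2)))
      = cant a * cant (m - a) := by
    intro a ha
    have ham := mem_range.mp ha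
    have e1 : 3*m+2 - 3*a = 3*(m-a)+2 := by omega
    have e2 : 3*m+2 - (3*a+1) = 3*(m-a)+1 := by omega
    rw [e1, e2, cant_3, cant_31, cant_31, cant_32, cant_32]
    ring
  rw [sum_congr rfl step]

lemma cA_succ_add (n : ℕ) : ((cA (n+1) : ZMod 3)) + (cA n : ZMod 3) = 0 := by
  induction n using Nat.strong_induction_on with
  | _ n ih =>
    obtain ⟨q, r, hr, hn⟩ : ∃ q r, r < 3 ∧ n+1 = 3*q + r := ⟨(n+1)/3, (n+1)%3, by omega, by omega⟩
    interval_cases r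
    · -- n+1 = 3q, q ≥ 1, n = 3(q-1)+2
      have hq : 1 ≤ q := by omega
      have h1 : n + 1 = 3*q := by omega
      have h2 : n = 3*(q-1)+2 := by omega
      rw [h1, h2, cA_3, cA_32]
      have : q = (q-1) + 1 := by omega
      rw [this]
      exact ih (q-1) (by omega)
    · -- n+1 = 3q+1, n = 3q
      have h1 : n = 3*q := by omega
      rw [show n+1 = 3*q+1 by omega, h1, cA_31, cA_3]
      push_cast
      ring_nf
      rw [show (3:ZMod 3) = 0 by decide, mul_zero]
    · -- n+1 = 3q+2, n = 3q+1
      rw [show n+1 = 3*q+2 by omega, show n = 3*q+1 by omega, cA_32, cA_31]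
      push_cast
      ring_nf
      rw [show (3:ZMod 3) = 0 by decide, mul_zero]

/-- The Cantor power series over `ZMod 3`. -/
noncomputable def Dser : PowerSeries (ZMod 3) := PowerSeries.mk fun n => (cant n : ZMod 3)

lemma Dsq : (1 + PowerSeries.X) * (Dser * Dser) = 1 := by
  ext n
  have hDD : ∀ k : ℕ, (PowerSeries.coeff k) (Dser * Dser) = (cA k : ZMod 3) := by
    intro k
    rw [PowerSeries.coeff_mul, Finset.Nat.sum_antidiagonal_eq_sum_range_succ_mk]
    simp only [Dser, PowerSeries.coeff_mk]
    rw [cA]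
    push_cast
    rfl
  rw [add_mul, one_mul]
  rw [map_add, hDD]
  cases n with
  | zero =>
    rw [PowerSeries.coeff_zero_eq_constantCoeff, map_mul]
    simp [cA_zero]
  | succ n =>
    rw [PowerSeries.coeff_succ_X_mul, hDD]
    rw [PowerSeries.coeff_one, if_neg (Nat.succ_ne_zero n)]
    exact cA_succ_add n

/-- Key lemma over `F₃`: no nonzero polynomial of degree ≤ m can approximate `Dser`
to order `2m+2`. -/
lemma keyF3 (m : ℕ) (V W : (ZMod 3)[X]) (hV : V ≠ 0) (hdV : V.natDegree ≤ m)
    (hdW : W.natDegree ≤ m)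
    (hdvd : (PowerSeries.X : PowerSeries (ZMod 3))^(2*m+2) ∣
      ((V : PowerSeries (ZMod 3)) * Dser - (W : PowerSeries (ZMod 3)))) : False := by
  set E : PowerSeries (ZMod 3) := (V : PowerSeries (ZMod 3)) * Dser - W with hE
  -- the norm identity
  have hnorm : ((V*V - (1+X) * (W*W) : (ZMod 3)[X]) : PowerSeries (ZMod 3))
      = E * ((1 + PowerSeries.X) * ((V : PowerSeries (ZMod 3)) * Dser + (W : PowerSeries (ZMod 3)))) := by
    have hcast : ((V*V - (1+X) * (W*W) : (ZMod 3)[X]) : PowerSeries (ZMod 3))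
        = (V : PowerSeries (ZMod 3)) * (V : PowerSeries (ZMod 3))
          - (1 + PowerSeries.X) * ((W : PowerSeries (ZMod 3)) * (W : PowerSeries (ZMod 3))) := by
      push_cast
      ring
    have expand : E * ((1 + PowerSeries.X) * ((V : PowerSeries (ZMod 3)) * Dser + (W : PowerSeries (ZMod 3))))
        = ((1 + PowerSeries.X) * (Dser * Dser)) * ((V:PowerSeries (ZMod 3))*(V:PowerSeries (ZMod 3)))
          - (1 + PowerSeries.X) * ((W:PowerSeries (ZMod 3))*(W:PowerSeries (ZMod 3))) := by
      rw [hE]; ring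
    rw [hcast, expand, Dsq, one_mul]
  -- the polynomial is zero
  have hdeg : (V*V - (1+X) * (W*W) : (ZMod 3)[X]).natDegree < 2*m+2 := by
    have h1 : (V*V : (ZMod 3)[X]).natDegree ≤ 2*m := le_trans (natDegree_mul_le) (by omega)
    have h2 : ((1+X) * (W*W) : (ZMod 3)[X]).natDegree ≤ 2*m+1 := by
      refine le_trans (natDegree_mul_le) ?_
      have h3 : (1+X : (ZMod 3)[X]).natDegree ≤ 1 := by
        refine le_trans (natDegree_add_le _ _) ?_
        simp
      have h4 : (W*W : (ZMod 3)[X]).natDegree ≤ 2*m := le_trans (natDegree_mul_le) (by omega)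
      omega
    have := natDegree_sub_le (V*V) ((1+X) * (W*W) : (ZMod 3)[X])
    omega
  have hzero : (V*V - (1+X) * (W*W) : (ZMod 3)[X]) = 0 := by
    apply Polynomial.ext
    intro i
    rcases lt_or_ge i (2*m+2) with hi | hi
    · have := (PowerSeries.X_pow_dvd_iff.mp (hnorm ▸ (Dvd.dvd.mul_right hdvd _))) i hi
      rwa [Polynomial.coeff_coe] at this
    · exact coeff_eq_zero_of_natDegree_lt (lt_of_lt_of_le hdeg hi)
  have hVV : V*V = (1+X) * (W*W) := by linear_combination hzero
  -- parity of root multiplicity at -1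
  have hW : W ≠ 0 := by
    intro h
    rw [h] at hVV
    simp at hVV
    exact hV hVV
  have hX1 : (1 + X : (ZMod 3)[X]) = X - Polynomial.C (-1) := by
    rw [map_neg, map_one]; ring
  have hne1 : (V*V : (ZMod 3)[X]) ≠ 0 := mul_ne_zero hV hV
  have hne2 : ((1+X) * (W*W) : (ZMod 3)[X]) ≠ 0 := by rw [← hVV]; exact hne1
  have hne3 : (W*W : (ZMod 3)[X]) ≠ 0 := mul_ne_zero hW hW
  have hne4 : (1+X : (ZMod 3)[X]) ≠ 0 := left_ne_zero_of_mul hne2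
  have e1 : rootMultiplicity (-1) (V*V) = 2 * rootMultiplicity (-1) V := by
    rw [rootMultiplicity_mul hne1]; ring
  have e2 : rootMultiplicity (-1) ((1+X) * (W*W) : (ZMod 3)[X])
      = 1 + 2 * rootMultiplicity (-1) W := by
    rw [rootMultiplicity_mul hne2, rootMultiplicity_mul hne3, hX1,
      rootMultiplicity_X_sub_C_self]
    ring
  rw [hVV, e2] at e1
  omega

end CantorMod3

section PolyLS

lemma coeff_finsum (f : ℕ → LaurentSeries ℚ) (s : Finset ℕ) (j : ℤ) :
    (∑ i ∈ s, f i).coeff j = ∑ i ∈ s, (f i).coeff j := by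
  classical
  induction s using Finset.induction with
  | empty => simp
  | insert _ _ h ih => rw [Finset.sum_insert h, Finset.sum_insert h, HahnSeries.coeff_add, ih]

lemma polyToLS_monomial (n : ℕ) (a : ℚ) :
    polyToLS (monomial n a) = HahnSeries.single (-(n:ℤ)) a := by
  rw [polyToLS, aeval_monomial,
    eq_ratCast (algebraMap ℚ (LaurentSeries ℚ)) a,
    ← eq_ratCast (HahnSeries.C : ℚ →+* LaurentSeries ℚ) a, HahnSeries.C_apply,
    HahnSeries.single_pow, HahnSeries.single_mul_single]
  norm_num

lemma polyToLS_eq_sum (p : ℚ[X]) (N : ℕ) (hN : p.natDegree < N) :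
    polyToLS p = ∑ i ∈ Finset.range N, HahnSeries.single (-(i:ℤ)) (p.coeff i) := by
  conv_lhs => rw [polyToLS, p.as_sum_range' N hN]
  rw [map_sum]
  exact Finset.sum_congr rfl fun i _ => polyToLS_monomial i (p.coeff i)

lemma coeff_polyToLS (p : ℚ[X]) (j : ℤ) :
    (polyToLS p).coeff j = if 0 ≤ -j then p.coeff (-j).toNat else 0 := by
  rw [polyToLS_eq_sum p (p.natDegree + 1) (Nat.lt_succ_self _), coeff_finsum]
  by_cases hj : 0 ≤ -j
  · rw [if_pos hj]
    by_cases hle : (-j).toNat < p.natDegree + 1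
    · rw [Finset.sum_eq_single ((-j).toNat)]
      · rw [HahnSeries.coeff_single, if_pos (by omega)]
      · intro i hi hne
        rw [HahnSeries.coeff_single, if_neg (by omega)]
      · intro h; exact absurd (Finset.mem_range.mpr hle) h
    · rw [Finset.sum_eq_zero, eq_comm]
      · exact coeff_eq_zero_of_natDegree_lt (by omega)
      · intro i hi
        have := Finset.mem_range.mp hi
        rw [HahnSeries.coeff_single, if_neg (by omega)]
  · rw [if_neg hj, Finset.sum_eq_zero]
    intro i hi
    rw [HahnSeries.coeff_single, if_neg (by omega)]

lemma coeff_polyToLS_pos (p : ℚ[X]) (j : ℤ) (hj : 0 < j) : (polyToLS p).coeff j = 0 := by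
  rw [coeff_polyToLS, if_neg (by omega)]

lemma coeff_polyToLS_mul (p : ℚ[X]) (F : LaurentSeries ℚ) (N : ℕ) (hN : p.natDegree < N) (j : ℤ) :
    (polyToLS p * F).coeff j = ∑ i ∈ Finset.range N, p.coeff i * F.coeff (j + i) := by
  rw [polyToLS_eq_sum p N hN, Finset.sum_mul, coeff_finsum]
  refine Finset.sum_congr rfl fun i _ => ?_
  have := HahnSeries.coeff_single_mul_add (r := p.coeff i) (x := F) (a := j + i) (b := -(i:ℤ))
  rw [show j + (i:ℤ) + -(i:ℤ) = j by ring] at this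
  rw [this]

lemma order_eq_of_coeffs {x : LaurentSeries ℚ} {v : ℤ} (h1 : x.coeff v ≠ 0)
    (h2 : ∀ j : ℤ, j < v → x.coeff j = 0) : x.order = v := by
  have hx : x ≠ 0 := fun h => h1 (by simp [h])
  refine le_antisymm (HahnSeries.order_le_of_coeff_ne_zero h1) ?_
  by_contra hlt
  push_neg at hlt
  exact hx (HahnSeries.coeff_order_eq_zero.mp (h2 _ hlt))

lemma polyToLS_ne_zero {p : ℚ[X]} (hp : p ≠ 0) : polyToLS p ≠ 0 := by
  intro h
  have : (polyToLS p).coeff (-(p.natDegree : ℤ)) = p.coeff p.natDegree := by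
    rw [coeff_polyToLS, if_pos (by omega)]
    norm_num
  rw [h] at this
  simp only [HahnSeries.coeff_zero] at this
  exact hp (leadingCoeff_eq_zero.mp this.symm)

lemma order_polyToLS {p : ℚ[X]} (hp : p ≠ 0) :
    (polyToLS p).order = -(p.natDegree : ℤ) := by
  apply order_eq_of_coeffs
  · rw [coeff_polyToLS, if_pos (by omega)]
    simpa using fun h => hp (leadingCoeff_eq_zero.mp h)
  · intro j hj
    rw [coeff_polyToLS]
    by_cases h0 : 0 ≤ -j
    · rw [if_pos h0]
      exact coeff_eq_zero_of_natDegree_lt (by omega)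
    · rw [if_neg h0]

end PolyLS

/-- coefficients of the partial products. -/
lemma partial_prod_coeff (m : ℕ) (n : ℤ) :
    (∏ h ∈ Finset.range m, (1 + HahnSeries.single ((3:ℤ)^h) (1:ℚ))).coeff n
      = if 0 ≤ n ∧ n < 3^m then (cant n.toNat : ℚ) else 0 := by
  induction m generalizing n with
  | zero =>
    rw [Finset.range_zero, Finset.prod_empty, HahnSeries.coeff_one]
    by_cases hn : n = 0
    · subst hn; rw [if_pos rfl, if_pos (by norm_num), Int.toNat_zero, cant_zero]; norm_num
    · rw [if_neg hn, if_neg (by omega)]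
  | succ m ih =>
    rw [Finset.prod_range_succ, mul_add, mul_one, HahnSeries.coeff_add]
    have hms : (x : HahnSeries ℤ ℚ) → (x * HahnSeries.single ((3:ℤ)^m) (1:ℚ)).coeff n
        = x.coeff (n - 3^m) := by
      intro x
      have := HahnSeries.coeff_mul_single_add (r := (1:ℚ)) (x := x)
        (a := n - 3^m) (b := (3:ℤ)^m)
      rw [show n - (3:ℤ)^m + 3^m = n by ring, mul_one] at this
      exact this
    rw [hms, ih, ih]
    have hT : ((3:ℤ)^m) = ((3^m : ℕ) : ℤ) := by push_cast; ring
    have hT1 : ((3:ℤ)^(m+1)) = ((3^(m+1) : ℕ) : ℤ) := by push_cast; ring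
    have hTpos : (1:ℤ) ≤ (3:ℤ)^m := one_le_pow₀ (by norm_num)
    have h31 : (3:ℤ)^(m+1) = 3 * 3^m := by ring
    -- case analysis
    rcases lt_trichotomy n 0 with hn | hn | hn
    · rw [if_neg (by omega), if_neg (by omega), if_neg (by omega)]; norm_num
    · subst hn
      rw [if_pos (by constructor <;> omega), if_neg (by omega), if_pos (by constructor <;> omega)]
      norm_num
    · -- n > 0
      by_cases h1 : n < 3^m
      · rw [if_pos ⟨by omega, h1⟩, if_neg (by omega), if_pos ⟨by omega, by omega⟩, add_zero]
      · by_cases h2 : n < 2 * 3^m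
        · rw [if_neg (by omega), if_pos ⟨by omega, by omega⟩, if_pos ⟨by omega, by omega⟩,
            zero_add]
          congr 1
          have hs : (n - 3^m).toNat < 3^m := by omega
          have hrw : n.toNat = 3^m + (n - 3^m).toNat := by omega
          rw [hrw, cant_add_pow m _ hs]
        · by_cases h3 : n < 3^(m+1)
          · rw [if_neg (by omega), if_neg (by omega), if_pos ⟨by omega, h3⟩, add_zero]
            rw [cant_two_lead m n.toNat (by omega) (by omega)]
            norm_num
          · rw [if_neg (by omega), if_neg (by omega), if_neg (by omega)]; norm_num


/-- The key uniqueness lemma over `ℚ`, by reduction mod 3. -/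
lemma keyQ (G : LaurentSeries ℚ)
    (hGc : ∀ j : ℤ, G.coeff j = if 0 ≤ j then (cant j.toNat : ℚ) else 0)
    (m : ℕ) (y : ℚ[X]) (hy : y ≠ 0) (hdeg : y.natDegree ≤ m)
    (h : ∀ j : ℤ, 0 < j → j ≤ m+1 → (polyToLS y * G).coeff j = 0) : False := by
  -- Step 1: sum form of the hypothesis
  have hsum : ∀ j' : ℕ, 1 ≤ j' → j' ≤ m+1 →
      ∑ i ∈ Finset.range (m+1), y.coeff i * (cant (j' + i) : ℚ) = 0 := by
    intro j' h1 h2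
    have := h (j' : ℤ) (by exact_mod_cast h1) (by exact_mod_cast h2)
    rw [coeff_polyToLS_mul y G (m+1) (by omega)] at this
    rw [← this]
    refine Finset.sum_congr rfl fun i _ => ?_
    rw [hGc, if_pos (by positivity)]
    have : ((j':ℤ) + (i:ℤ)).toNat = j' + i := by omega
    rw [this]
  -- Step 2: integer normalization
  obtain ⟨b, hb⟩ := IsLocalization.integerNormalization_map_to_map (nonZeroDivisors ℤ) y
  set z : ℤ[X] := IsLocalization.integerNormalization (nonZeroDivisors ℤ) y with hzdef
  have hbne : (b : ℤ) ≠ 0 := nonZeroDivisors.coe_ne_zero b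
  have hzcoeff : ∀ i, ((z.coeff i : ℚ)) = (b : ℤ) • (y.coeff i) := by
    intro i
    have := congrArg (fun p => Polynomial.coeff p i) hb
    simpa [Polynomial.coeff_smul, algebraMap_int_eq, eq_intCast] using this
  have hzne : z ≠ 0 := by
    intro h0
    apply hy
    ext i
    have := hzcoeff i
    rw [h0] at this
    simp only [Polynomial.coeff_zero, Int.cast_zero, zsmul_eq_mul] at this
    have : (b:ℚ) * y.coeff i = 0 := by exact_mod_cast this.symm
    rcases mul_eq_zero.mp this with hb0 | hy0
    · exact absurd (by exact_mod_cast hb0) hbne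
    · simpa using hy0
  have hzdeg : z.natDegree ≤ m := by
    rw [natDegree_le_iff_coeff_eq_zero]
    intro N hN
    have hyN : y.coeff N = 0 := coeff_eq_zero_of_natDegree_lt (by omega)
    have := hzcoeff N
    rw [hyN, smul_zero] at this
    exact_mod_cast this
  -- Step 3: primitive part
  set v : ℤ[X] := z.primPart with hvdef
  have hvne : v ≠ 0 := z.primPart_ne_zero
  have hzfac : z = Polynomial.C z.content * v := z.eq_C_content_mul_primPart
  have hcne : z.content ≠ 0 := fun h0 => hzne (content_eq_zero_iff.mp h0)
  have hvdeg : v.natDegree ≤ m := by rw [hvdef, natDegree_primPart]; exact hzdeg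
  -- Step 4: integer sum conditions for v
  have hvsum : ∀ j' : ℕ, 1 ≤ j' → j' ≤ m+1 →
      ∑ i ∈ Finset.range (m+1), v.coeff i * (cant (j' + i) : ℤ) = 0 := by
    intro j' h1 h2
    have hq : ∑ i ∈ Finset.range (m+1), (z.coeff i : ℚ) * (cant (j' + i) : ℚ) = 0 := by
      have := hsum j' h1 h2
      calc ∑ i ∈ Finset.range (m+1), (z.coeff i : ℚ) * (cant (j' + i) : ℚ)
          = (b:ℤ) • ∑ i ∈ Finset.range (m+1), y.coeff i * (cant (j' + i) : ℚ) := by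
            rw [Finset.smul_sum]
            refine Finset.sum_congr rfl fun i _ => ?_
            rw [hzcoeff i, smul_mul_assoc]
        _ = 0 := by rw [this, smul_zero]
    have hq2 : ∑ i ∈ Finset.range (m+1), (v.coeff i : ℚ) * (cant (j' + i) : ℚ) = 0 := by
      have hfac : ∀ i, (z.coeff i : ℚ) = (z.content : ℚ) * (v.coeff i : ℚ) := by
        intro i
        conv_lhs => rw [hzfac]
        rw [Polynomial.coeff_C_mul]
        push_cast
        ring
      rw [Finset.sum_congr rfl (fun i _ => by rw [hfac i, mul_assoc]), ← Finset.mul_sum] at hq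
      rcases mul_eq_zero.mp hq with h0 | h0
      · exact absurd (by exact_mod_cast h0) hcne
      · exact h0
    exact_mod_cast hq2
  -- Step 5: reduce mod 3
  set vb : (ZMod 3)[X] := v.map (Int.castRingHom (ZMod 3)) with hvbdef
  have hvbne : vb ≠ 0 := by
    intro h0
    have hdvd : ∀ i, (3:ℤ) ∣ v.coeff i := by
      intro i
      have : vb.coeff i = 0 := by rw [h0]; simp
      rw [hvbdef, Polynomial.coeff_map] at this
      exact_mod_cast (ZMod.intCast_zmod_eq_zero_iff_dvd (v.coeff i) 3).mp this
    have : Polynomial.C (3:ℤ) ∣ v := (Polynomial.C_dvd_iff_dvd_coeff _ _).mpr hdvd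
    have := z.isPrimitive_primPart (3:ℤ) this
    rw [Int.isUnit_iff] at this
    omega
  have hvbdeg : vb.natDegree ≤ m := le_trans natDegree_map_le hvdeg
  have hvbsum : ∀ j' : ℕ, 1 ≤ j' → j' ≤ m+1 →
      ∑ i ∈ Finset.range (m+1), vb.coeff i * (cant (j' + i) : ZMod 3) = 0 := by
    intro j' h1 h2
    have h0 : ((∑ i ∈ Finset.range (m+1), v.coeff i * (cant (j' + i) : ℤ) : ℤ) : ZMod 3) = 0 := by
      rw [hvsum j' h1 h2]; simp
    push_cast at h0
    rw [← h0]
    refine Finset.sum_congr rfl fun i _ => ?_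
    rw [hvbdef, Polynomial.coeff_map]
    norm_num
  -- Step 6: build V and W and apply keyF3
  set V : (ZMod 3)[X] := reflect m vb with hVdef
  have hVne : V ≠ 0 := fun h0 => hvbne (reflect_eq_zero_iff.mp h0)
  have hVdeg : V.natDegree ≤ m := by
    rw [natDegree_le_iff_coeff_eq_zero]
    intro N hN
    rw [hVdef, coeff_reflect, revAt_eq_self_of_lt hN]
    exact coeff_eq_zero_of_natDegree_lt (by omega)
  set W : (ZMod 3)[X] := PowerSeries.trunc (m+1) ((V : PowerSeries (ZMod 3)) * Dser) with hWdef
  have hWdeg : W.natDegree ≤ m := by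
    rw [hWdef]
    exact Nat.lt_succ_iff.mp (PowerSeries.natDegree_trunc_lt _ m)
  apply keyF3 m V W hVne hVdeg hWdeg
  rw [PowerSeries.X_pow_dvd_iff]
  intro k hk
  rw [map_sub, Polynomial.coeff_coe]
  rw [hWdef, PowerSeries.coeff_trunc]
  by_cases hkm : k < m + 1
  · rw [if_pos hkm, sub_self]
  · rw [if_neg hkm, sub_zero]
    -- m+1 ≤ k ≤ 2m+1
    have hk1 : m + 1 ≤ k := by omega
    have hk2 : k ≤ 2*m+1 := by omega
    rw [PowerSeries.coeff_mul, Finset.Nat.sum_antidiagonal_eq_sum_range_succ_mk]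
    have hsub : Finset.range (m+1) ⊆ Finset.range (k+1) := by
      intro i hi
      rw [Finset.mem_range] at *
      omega
    rw [← Finset.sum_subset hsub (by
      intro l hl hnl
      rw [Finset.mem_range] at *
      have : V.natDegree < l := by omega
      rw [Polynomial.coeff_coe, coeff_eq_zero_of_natDegree_lt this, zero_mul])]
    have hred : ∀ l ∈ Finset.range (m+1),
        (PowerSeries.coeff l) (V : PowerSeries (ZMod 3)) * (PowerSeries.coeff (k - l)) Dser
        = vb.coeff (m - l) * (cant (k - l) : ZMod 3) := by
      intro l hl
      have hlm := Finset.mem_range.mp hl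
      rw [Polynomial.coeff_coe, hVdef, coeff_reflect, revAt_le (by omega)]
      simp only [Dser, PowerSeries.coeff_mk]
    rw [Finset.sum_congr rfl hred]
    have hrefl := Finset.sum_range_reflect
      (fun l => vb.coeff (m - l) * (cant (k - l) : ZMod 3)) (m+1)
    rw [← hrefl]
    have heq : ∀ l ∈ Finset.range (m+1),
        vb.coeff (m - (m + 1 - 1 - l)) * (cant (k - (m + 1 - 1 - l)) : ZMod 3)
        = vb.coeff l * (cant ((k - m) + l) : ZMod 3) := by
      intro l hl
      have hlm := Finset.mem_range.mp hl
      have e1 : m - (m + 1 - 1 - l) = l := by omega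
      have e2 : k - (m + 1 - 1 - l) = (k - m) + l := by omega
      rw [e1, e2]
    rw [Finset.sum_congr rfl heq]
    exact hvbsum (k - m) (by omega) (by omega)


lemma polyToLS_mul (p q : ℚ[X]) : polyToLS (p*q) = polyToLS p * polyToLS q := by
  rw [polyToLS, polyToLS, polyToLS, map_mul]

/-- the linear map whose kernel gives approximant denominators. -/
noncomputable def phiMap (G : LaurentSeries ℚ) (n : ℕ) :
    (Fin (n+1) → ℚ) →ₗ[ℚ] (Fin n → ℚ) where
  toFun v := fun j => ∑ i : Fin (n+1), v i * G.coeff (((j:ℕ) : ℤ) + 1 + (i:ℕ))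
  map_add' a b := by
    funext j
    simp [add_mul, Finset.sum_add_distrib]
  map_smul' c a := by
    funext j
    simp [Finset.mul_sum, smul_eq_mul, mul_assoc]

theorem cantor_product_all_partial_quotients_linear
    (G : LaurentSeries ℚ)
    -- `G` is the infinite product `∏_{h=0}^∞ (1 + X^{-3^h})`, characterised by agreeing,
    -- in each coefficient of `X^{-n}` with `n < 3^m`, with the partial product over `h < m`.
    (hG : ∀ (m : ℕ) (n : ℤ), n < 3 ^ m →
      G.coeff n =
        (∏ h ∈ Finset.range m,
          (1 + HahnSeries.single ((3 : ℤ) ^ h) (1 : ℚ))).coeff n) :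
    ∀ n : ℕ, ∃ x y : ℚ[X], IsCoprime x y ∧ y.natDegree = n ∧
      lsDeg (polyToLS y * G - polyToLS x) = ((-(n + 1 : ℤ) : ℤ) : WithBot ℤ) := by
  have hGc : ∀ j : ℤ, G.coeff j = if 0 ≤ j then (cant j.toNat : ℚ) else 0 := by
    intro j
    have hj : j < 3^(j.toNat) := by
      rcases le_or_gt j 0 with h | h
      · calc j ≤ 0 := h
          _ < 3^(j.toNat) := by positivity
      · have h2 := Nat.lt_pow_self (n := j.toNat) (by norm_num : (1:ℕ) < 3)
        calc j = (j.toNat : ℤ) := by omega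
          _ < ((3^(j.toNat) : ℕ) : ℤ) := by exact_mod_cast h2
          _ = 3^(j.toNat) := by push_cast; ring
    rw [hG j.toNat j hj, partial_prod_coeff]
    by_cases h0 : 0 ≤ j
    · rw [if_pos ⟨h0, hj⟩, if_pos h0]
    · rw [if_neg (fun hc => h0 hc.1), if_neg h0]
  intro n
  -- find the kernel vector
  have hnotinj : ¬ Function.Injective (phiMap G n) := by
    intro hinj
    have := LinearMap.finrank_le_finrank_of_injective hinj
    rw [Module.finrank_fin_fun, Module.finrank_fin_fun] at this
    omega
  have hkerne : LinearMap.ker (phiMap G n) ≠ ⊥ := fun h => hnotinj (LinearMap.ker_eq_bot.mp h)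
  obtain ⟨v, hvmem, hvne⟩ := (Submodule.ne_bot_iff _).mp hkerne
  have hvker : phiMap G n v = 0 := LinearMap.mem_ker.mp hvmem
  -- the polynomial y
  set y : ℚ[X] := ∑ i : Fin (n+1), monomial (i:ℕ) (v i) with hydef
  have hycoeff : ∀ k : ℕ, y.coeff k = if h : k < n+1 then v ⟨k, h⟩ else 0 := by
    intro k
    rw [hydef, Polynomial.finset_sum_coeff]
    by_cases h : k < n+1
    · rw [dif_pos h, Finset.sum_eq_single (⟨k, h⟩ : Fin (n+1))]
      · rw [coeff_monomial, if_pos rfl]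
      · intro i _ hne
        rw [coeff_monomial, if_neg (fun hik => hne (by apply Fin.ext; exact hik))]
      · intro habs; exact absurd (Finset.mem_univ _) habs
    · rw [dif_neg h, Finset.sum_eq_zero]
      intro i _
      rw [coeff_monomial, if_neg (by omega)]
  have hydeg : y.natDegree ≤ n := by
    rw [natDegree_le_iff_coeff_eq_zero]
    intro N hN
    rw [hycoeff, dif_neg (by omega)]
  have hyne : y ≠ 0 := by
    obtain ⟨i, hi⟩ := Function.ne_iff.mp hvne
    intro h0
    apply hi
    have h1 := hycoeff (i:ℕ)
    rw [h0, Polynomial.coeff_zero, dif_pos i.isLt] at h1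
    have h2 : v ⟨(i:ℕ), i.isLt⟩ = 0 := h1.symm
    rw [Fin.eta] at h2
    simpa using h2
  -- kernel coefficient conditions
  have hkerc : ∀ j : ℤ, 0 < j → j ≤ n → (polyToLS y * G).coeff j = 0 := by
    intro j h1 h2
    rw [coeff_polyToLS_mul y G (n+1) (by omega)]
    have hv := congrFun hvker ⟨j.toNat - 1, by omega⟩
    simp only [phiMap, LinearMap.coe_mk, AddHom.coe_mk, Pi.zero_apply] at hv
    rw [← Fin.sum_univ_eq_sum_range (fun i => y.coeff i * G.coeff (j + i)) (n+1), ← hv]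
    refine Finset.sum_congr rfl fun i _ => ?_
    rw [hycoeff, dif_pos i.isLt, Fin.eta]
    have harg : j + ((i:ℕ):ℤ) = ((j.toNat - 1 : ℕ) : ℤ) + 1 + ((i:ℕ) : ℤ) := by omega
    rw [harg]
  -- the polynomial x
  set x : ℚ[X] := ∑ i : Fin (n+1), monomial (i:ℕ) ((polyToLS y * G).coeff (-((i:ℕ):ℤ))) with hxdef
  have hxcoeff : ∀ k : ℕ, x.coeff k
      = if k < n+1 then (polyToLS y * G).coeff (-(k:ℤ)) else 0 := by
    intro k
    rw [hxdef, Polynomial.finset_sum_coeff]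
    by_cases h : k < n+1
    · rw [if_pos h, Finset.sum_eq_single (⟨k, h⟩ : Fin (n+1))]
      · rw [coeff_monomial, if_pos rfl]
      · intro i _ hne
        rw [coeff_monomial, if_neg (fun hik => hne (by apply Fin.ext; exact hik))]
      · intro habs; exact absurd (Finset.mem_univ _) habs
    · rw [if_neg h, Finset.sum_eq_zero]
      intro i _
      rw [coeff_monomial, if_neg (by omega)]
  set S : LaurentSeries ℚ := polyToLS y * G - polyToLS x with hSdef
  -- low coefficients vanish
  have hSlow : ∀ j : ℤ, j ≤ (n:ℤ) → S.coeff j = 0 := by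
    intro j hj
    rw [hSdef, HahnSeries.coeff_sub]
    rcases lt_trichotomy j 0 with h0 | h0 | h0
    · -- j < 0
      rw [coeff_polyToLS]
      by_cases hbig : (-j).toNat < n+1
      · rw [if_pos (by omega), hxcoeff, if_pos hbig]
        have : -(((-j).toNat : ℕ) : ℤ) = j := by omega
        rw [this, sub_self]
      · rw [if_pos (by omega), hxcoeff, if_neg hbig, sub_zero]
        rw [coeff_polyToLS_mul y G (n+1) (by omega)]
        apply Finset.sum_eq_zero
        intro i hi
        have him := Finset.mem_range.mp hi
        rw [hGc, if_neg (by omega), mul_zero]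
    · -- j = 0
      subst h0
      rw [coeff_polyToLS]
      rw [if_pos (by omega), hxcoeff, if_pos (by omega)]
      norm_num
    · -- 0 < j ≤ n
      rw [coeff_polyToLS_pos x j h0, sub_zero]
      exact hkerc j h0 hj
  -- top coefficient nonzero
  have hStop : S.coeff ((n:ℤ)+1) ≠ 0 := by
    intro h0
    apply keyQ G hGc n y hyne hydeg
    intro j h1 h2
    rcases lt_or_ge j ((n:ℤ)+1) with h3 | h3
    · exact hkerc j h1 (by omega)
    · have hj : j = (n:ℤ)+1 := by omega
      subst hj
      have := hSlow
      rw [hSdef, HahnSeries.coeff_sub, coeff_polyToLS_pos x _ (by omega), sub_zero] at h0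
      exact h0
  have hSne : S ≠ 0 := fun h0 => hStop (by rw [h0]; simp)
  have hSorder : S.order = (n:ℤ)+1 :=
    order_eq_of_coeffs hStop (fun j hj => hSlow j (by omega))
  -- y has exact degree n
  have hydeg_eq : y.natDegree = n := by
    by_contra hne
    have hlt : y.natDegree < n := by omega
    apply keyQ G hGc y.natDegree y hyne le_rfl
    intro j h1 h2
    exact hkerc j h1 (by omega)
  -- coprimality
  have hcop : IsCoprime x y := by
    by_contra hncop
    obtain ⟨g, hgne, hge, x1, hx1, y1, hy1⟩ :
        ∃ g : ℚ[X], g ≠ 0 ∧ 1 ≤ g.natDegree ∧ ∃ x1, x = g*x1 ∧ ∃ y1, y = g*y1 := by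
      refine ⟨EuclideanDomain.gcd x y, ?_, ?_, ?_⟩
      · intro h0
        exact hyne (EuclideanDomain.gcd_eq_zero_iff.mp h0).2
      · have hgnu : ¬ IsUnit (EuclideanDomain.gcd x y) :=
          fun hu => hncop (EuclideanDomain.gcd_isUnit_iff.mp hu)
        by_contra hd
        push_neg at hd
        have hd0 : (EuclideanDomain.gcd x y).natDegree = 0 := by omega
        have hC := Polynomial.eq_C_of_natDegree_eq_zero hd0
        apply hgnu
        rw [hC]
        refine Polynomial.isUnit_C.mpr (isUnit_iff_ne_zero.mpr ?_)
        intro h0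
        have : EuclideanDomain.gcd x y = 0 := by rw [hC, h0, map_zero]
        exact hyne (EuclideanDomain.gcd_eq_zero_iff.mp this).2
      · obtain ⟨x1, hx1⟩ := EuclideanDomain.gcd_dvd_left x y
        obtain ⟨y1, hy1⟩ := EuclideanDomain.gcd_dvd_right x y
        exact ⟨x1, hx1, y1, hy1⟩
    have hy1ne : y1 ≠ 0 := by
      intro h0
      rw [h0, mul_zero] at hy1
      exact hyne hy1
    have hy1deg : y1.natDegree = n - g.natDegree := by
      have := Polynomial.natDegree_mul hgne hy1ne
      rw [← hy1, hydeg_eq] at this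
      omega
    have hgdegn : g.natDegree ≤ n := by
      have := Polynomial.natDegree_mul hgne hy1ne
      rw [← hy1, hydeg_eq] at this
      omega
    set S1 : LaurentSeries ℚ := polyToLS y1 * G - polyToLS x1 with hS1def
    have hfac : S = polyToLS g * S1 := by
      rw [hSdef, hS1def, hx1, hy1, polyToLS_mul, polyToLS_mul]
      ring
    have hS1ne : S1 ≠ 0 := by
      intro h0
      rw [hfac, h0, mul_zero] at hSne
      exact hSne rfl
    have horder : S1.order = (n:ℤ) + 1 + g.natDegree := by
      have := HahnSeries.order_mul (polyToLS_ne_zero hgne) hS1ne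
      rw [← hfac, hSorder, order_polyToLS hgne] at this
      omega
    apply keyQ G hGc y1.natDegree y1 hy1ne le_rfl
    intro j h1 h2
    have hjlt : j < S1.order := by
      rw [horder]
      have : (y1.natDegree : ℤ) ≤ (n:ℤ) - g.natDegree := by
        rw [hy1deg]; omega
      omega
    have := HahnSeries.coeff_eq_zero_of_lt_order hjlt
    rw [hS1def, HahnSeries.coeff_sub, coeff_polyToLS_pos x1 j h1, sub_zero] at this
    exact this
  refine ⟨x, y, hcop, hydeg_eq, ?_⟩
  rw [← hSdef, lsDeg, if_neg hSne, hSorder]
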